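/- Let a = (a_0, ..., a_N) be an isotropic random vector in ℝ^{N+1} (mean zero, identity covariance) satisfying ℙ(|⟨a, u⟩| < ε) ≤ K ε for all unit vectors u and all ε > 0, for some K ≥ 1. For z ∈ ℂ, let X_z = |Σ_{j=0}^N a_j z^j|². Then for every z and every t > 0, ℙ(|log X_z − log E[X_z]| > t) ≤ 3K e^{−t/2}, where E[X_z] = Σ_{k=0}^N |z|^{2k}. -/

import Mathlib

open MeasureTheory Finset
open scoped ENNReal

/-- Two-sided tail bound for `log X_z` where `X_z = |∑_j a_j z^j|²` and `a` is an
isotropic random vector with linear anti-concentration: for all `z` and `t > 0`,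
`ℙ(|log X_z − log E[X_z]| > t) ≤ 3 K e^{−t/2}`, where `E[X_z] = ∑_k |z|^{2k}`. -/
theorem stmt9 {Ω : Type*} [MeasurableSpace Ω] (P : Measure Ω) [IsProbabilityMeasure P]
    (N : ℕ) (a : Ω → Fin (N + 1) → ℝ) (hmeas : Measurable a)
    (hmean : ∀ i, ∫ ω, a ω i ∂P = 0)
    (hcov : ∀ i j, ∫ ω, a ω i * a ω j ∂P = if i = j then 1 else 0)
    (K : ℝ) (hK : 1 ≤ K)
    (hanti : ∀ u : Fin (N + 1) → ℝ, (∑ i, u i ^ 2) = 1 → ∀ ε > (0 : ℝ),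
      (P {ω | |∑ i, a ω i * u i| < ε}).toReal ≤ K * ε)
    (z : ℂ) (t : ℝ) (ht : 0 < t) :
    (P {ω | |Real.log ((‖∑ j : Fin (N + 1), (a ω j : ℂ) * z ^ (j : ℕ)‖) ^ 2)
          - Real.log (∑ k : Fin (N + 1), ‖z‖ ^ (2 * (k : ℕ)))| > t}).toReal
      ≤ 3 * K * Real.exp (-t / 2) := by
  set u : Fin (N + 1) → ℝ := fun j => (z ^ (j : ℕ)).re with hu
  set v : Fin (N + 1) → ℝ := fun j => (z ^ (j : ℕ)).im with hv
  set M : ℝ := ∑ k : Fin (N + 1), ‖z‖ ^ (2 * (k : ℕ)) with hM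
  set f : Ω → ℝ := fun ω => (‖∑ j : Fin (N + 1), (a ω j : ℂ) * z ^ (j : ℕ)‖) ^ 2
    with hfdef
  set g : Ω → ℝ := fun ω => ∑ j, a ω j * u j with hg
  set h : Ω → ℝ := fun ω => ∑ j, a ω j * v j with hh
  -- basic facts
  have hM1 : 1 ≤ M := by
    rw [hM]
    have := Finset.single_le_sum (f := fun k : Fin (N + 1) => ‖z‖ ^ (2 * (k : ℕ)))
      (fun k _ => by positivity) (Finset.mem_univ 0)
    simpa using this
  have hMpos : 0 < M := lt_of_lt_of_le one_pos hM1
  have hMuv : (∑ j, u j ^ 2) + (∑ j, v j ^ 2) = M := by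
    rw [hM, ← Finset.sum_add_distrib]
    refine Finset.sum_congr rfl fun j _ => ?_
    have : u j ^ 2 + v j ^ 2 = Complex.normSq (z ^ (j : ℕ)) := by
      rw [Complex.normSq_apply, hu, hv]; ring
    rw [this, ← Complex.sq_norm, norm_pow, ← pow_mul, mul_comm (j : ℕ) 2]
  have hf : ∀ ω, f ω = g ω ^ 2 + h ω ^ 2 := by
    intro ω
    rw [hfdef]
    simp only
    rw [Complex.sq_norm, Complex.normSq_apply]
    have hre : (∑ j : Fin (N + 1), (a ω j : ℂ) * z ^ (j : ℕ)).re = g ω := by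
      rw [Complex.re_sum, hg]
      refine Finset.sum_congr rfl fun j _ => ?_
      simp [Complex.mul_re, hu]
    have him : (∑ j : Fin (N + 1), (a ω j : ℂ) * z ^ (j : ℕ)).im = h ω := by
      rw [Complex.im_sum, hh]
      refine Finset.sum_congr rfl fun j _ => ?_
      simp [Complex.mul_im, hv]
    rw [hre, him]; ring
  -- measurability
  have hmeasi : ∀ i, Measurable fun ω => a ω i := fun i => (measurable_pi_apply i).comp hmeas
  have hmeasf : Measurable f := by
    apply Measurable.pow_const
    exact (continuous_norm.measurable).comp (Finset.measurable_sum _ fun j _ =>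
      ((Complex.measurable_ofReal.comp (hmeasi j)).mul_const _))
  -- integrability
  have hInt2 : ∀ i, Integrable (fun ω => a ω i ^ 2) P := by
    intro i
    by_contra hni
    have h0 : ∫ ω, a ω i ^ 2 ∂P = 0 := integral_undef hni
    have h1 := hcov i i
    simp only [if_pos rfl] at h1
    have : (fun ω => a ω i * a ω i) = fun ω => a ω i ^ 2 := by funext ω; ring
    rw [this, h0] at h1
    norm_num at h1
  have hIntProd : ∀ i j, Integrable (fun ω => a ω i * a ω j) P := by
    intro i j
    refine Integrable.mono ((hInt2 i).add (hInt2 j)) ?_ ?_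
    · exact ((hmeasi i).mul (hmeasi j)).aestronglyMeasurable
    · filter_upwards with ω
      simp only [Real.norm_eq_abs]
      have h1 : |a ω i * a ω j| ≤ a ω i ^ 2 + a ω j ^ 2 := by
        rcases abs_cases (a ω i * a ω j) with ⟨he, _⟩ | ⟨he, _⟩ <;> rw [he] <;>
          nlinarith [sq_nonneg (a ω i - a ω j), sq_nonneg (a ω i + a ω j)]
      have h2 : |a ω i ^ 2 + a ω j ^ 2| = a ω i ^ 2 + a ω j ^ 2 := abs_of_nonneg (by positivity)
      simp only [Pi.add_apply]
      rw [h2]; exact h1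
  have key_int : ∀ w : Fin (N + 1) → ℝ,
      Integrable (fun ω => (∑ j, a ω j * w j) ^ 2) P ∧
      ∫ ω, (∑ j, a ω j * w j) ^ 2 ∂P = ∑ j, w j ^ 2 := by
    intro w
    have hexp : (fun ω => (∑ j, a ω j * w j) ^ 2)
        = fun ω => ∑ i, ∑ j, (w i * w j) * (a ω i * a ω j) := by
      funext ω
      rw [sq, Finset.sum_mul_sum]
      exact Finset.sum_congr rfl fun i _ => Finset.sum_congr rfl fun j _ => by ring
    have hint : Integrable (fun ω => (∑ j, a ω j * w j) ^ 2) P := by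
      rw [hexp]
      exact integrable_finset_sum _ fun i _ =>
        integrable_finset_sum _ fun j _ => (hIntProd i j).const_mul _
    refine ⟨hint, ?_⟩
    rw [hexp, integral_finset_sum _ fun i _ =>
      integrable_finset_sum _ fun j _ => (hIntProd i j).const_mul _]
    have : ∀ i : Fin (N + 1), ∫ ω, ∑ j, (w i * w j) * (a ω i * a ω j) ∂P = w i ^ 2 := by
      intro i
      rw [integral_finset_sum _ fun j _ => (hIntProd i j).const_mul _]
      have : ∀ j : Fin (N + 1), ∫ ω, (w i * w j) * (a ω i * a ω j) ∂P
          = (w i * w j) * if i = j then 1 else 0 := by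
        intro j
        rw [integral_const_mul, hcov i j]
      rw [Finset.sum_congr rfl fun j _ => this j]
      simp [Finset.sum_ite_eq, sq]
    rw [Finset.sum_congr rfl fun i _ => this i]
  have hIntf : Integrable f P := by
    have : f = fun ω => g ω ^ 2 + h ω ^ 2 := funext hf
    rw [this]
    exact ((key_int u).1).add ((key_int v).1)
  have hEf : ∫ ω, f ω ∂P = M := by
    have : f = fun ω => g ω ^ 2 + h ω ^ 2 := funext hf
    rw [this, integral_add (key_int u).1 (key_int v).1, (key_int u).2, (key_int v).2, hMuv]
  -- upper tail via Markov
  have hupper : (P {ω | M * Real.exp t ≤ f ω}).toReal ≤ Real.exp (-t) := by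
    have hmarkov := mul_meas_ge_le_integral_of_nonneg
      (f := f) (μ := P) (Filter.Eventually.of_forall fun ω => by positivity) hIntf (M * Real.exp t)
    rw [hEf] at hmarkov
    have hpos : 0 < M * Real.exp t := by positivity
    rw [Real.exp_neg]
    rw [← le_div_iff₀' hpos] at hmarkov
    calc (P {ω | M * Real.exp t ≤ f ω}).toReal ≤ M / (M * Real.exp t) := hmarkov
      _ = (Real.exp t)⁻¹ := by field_simp
  -- lower tail via anti-concentration
  have key : ∀ w : Fin (N + 1) → ℝ, M / 2 ≤ ∑ i, w i ^ 2 →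
      (∀ ω, (∑ i, a ω i * w i) ^ 2 ≤ f ω) →
      (P {ω | f ω < M * Real.exp (-t)}).toReal ≤ K * Real.sqrt 2 * Real.exp (-t / 2) := by
    intro w hw hdom
    set s : ℝ := Real.sqrt (∑ i, w i ^ 2) with hs
    have hwpos : 0 < ∑ i, w i ^ 2 := lt_of_lt_of_le (by linarith) hw
    have hspos : 0 < s := Real.sqrt_pos.2 hwpos
    have hs2 : s ^ 2 = ∑ i, w i ^ 2 := Real.sq_sqrt hwpos.le
    set uhat : Fin (N + 1) → ℝ := fun i => w i / s with huhat
    have hunit : (∑ i, uhat i ^ 2) = 1 := by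
      simp only [huhat, div_pow]
      rw [← Finset.sum_div, ← hs2]
      field_simp
    set ε : ℝ := Real.sqrt M * Real.exp (-t / 2) / s with hε
    have hεpos : 0 < ε := by
      apply div_pos _ hspos
      positivity
    have hsub : {ω | f ω < M * Real.exp (-t)} ⊆ {ω | |∑ i, a ω i * uhat i| < ε} := by
      intro ω hω
      simp only [Set.mem_setOf_eq] at hω ⊢
      have h1 : (∑ i, a ω i * w i) ^ 2 < M * Real.exp (-t) := lt_of_le_of_lt (hdom ω) hω
      have h2 : M * Real.exp (-t) = (Real.sqrt M * Real.exp (-t / 2)) ^ 2 := by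
        rw [mul_pow, Real.sq_sqrt hMpos.le, sq, ← Real.exp_add]
        norm_num
      have h3 : |∑ i, a ω i * w i| < Real.sqrt M * Real.exp (-t / 2) := by
        have hc : 0 < Real.sqrt M * Real.exp (-t / 2) := by positivity
        rw [h2] at h1
        exact abs_lt_of_sq_lt_sq h1 hc.le
      have h4 : (∑ i, a ω i * uhat i) = (∑ i, a ω i * w i) / s := by
        rw [Finset.sum_div]
        exact Finset.sum_congr rfl fun i _ => by simp only [huhat]; ring
      rw [h4, abs_div, abs_of_pos hspos, hε]
      gcongr
    have hmono : (P {ω | f ω < M * Real.exp (-t)}).toReal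
        ≤ (P {ω | |∑ i, a ω i * uhat i| < ε}).toReal := by
      apply ENNReal.toReal_mono (measure_ne_top P _)
      exact measure_mono hsub
    have hanti' := hanti uhat hunit ε hεpos
    have hεbound : ε ≤ Real.sqrt 2 * Real.exp (-t / 2) := by
      rw [hε]
      rw [div_le_iff₀ hspos]
      have h5 : Real.sqrt M ≤ Real.sqrt 2 * s := by
        have h6 : Real.sqrt (M / 2) ≤ s := Real.sqrt_le_sqrt hw
        have h7 : Real.sqrt M = Real.sqrt 2 * Real.sqrt (M / 2) := by
          rw [← Real.sqrt_mul (by norm_num : (0:ℝ) ≤ 2)]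
          congr 1
          ring
        rw [h7]
        exact mul_le_mul_of_nonneg_left h6 (Real.sqrt_nonneg 2)
      calc Real.sqrt M * Real.exp (-t / 2) ≤ (Real.sqrt 2 * s) * Real.exp (-t / 2) :=
            mul_le_mul_of_nonneg_right h5 (Real.exp_pos _).le
        _ = Real.sqrt 2 * Real.exp (-t / 2) * s := by ring
    calc (P {ω | f ω < M * Real.exp (-t)}).toReal
        ≤ K * ε := le_trans hmono hanti'
      _ ≤ K * (Real.sqrt 2 * Real.exp (-t / 2)) :=
          mul_le_mul_of_nonneg_left hεbound (by linarith)
      _ = K * Real.sqrt 2 * Real.exp (-t / 2) := by ring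
  have hlower : (P {ω | f ω < M * Real.exp (-t)}).toReal
      ≤ K * Real.sqrt 2 * Real.exp (-t / 2) := by
    by_cases hcase : M / 2 ≤ ∑ i, u i ^ 2
    · exact key u hcase fun ω => by rw [hf ω, hg]; nlinarith [sq_nonneg (h ω)]
    · have : M / 2 ≤ ∑ i, v i ^ 2 := by push_neg at hcase; linarith [hMuv]
      exact key v this fun ω => by rw [hf ω, hh]; nlinarith [sq_nonneg (g ω)]
  -- assemble
  have hsubset : {ω | |Real.log (f ω) - Real.log M| > t}
      ⊆ {ω | M * Real.exp t ≤ f ω} ∪ {ω | f ω < M * Real.exp (-t)} := by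
    intro ω hω
    simp only [Set.mem_setOf_eq, Set.mem_union] at hω ⊢
    by_contra hcon
    push_neg at hcon
    obtain ⟨h1, h2⟩ := hcon
    have hfpos : 0 < f ω := lt_of_lt_of_le (by positivity) h2
    have hup : Real.log (f ω) < Real.log M + t := by
      have := Real.log_lt_log hfpos h1
      rwa [Real.log_mul hMpos.ne' (Real.exp_pos t).ne', Real.log_exp] at this
    have hdown : Real.log M - t ≤ Real.log (f ω) := by
      have := Real.log_le_log (by positivity) h2
      rw [Real.log_mul hMpos.ne' (Real.exp_pos (-t)).ne', Real.log_exp] at this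
      linarith
    have : |Real.log (f ω) - Real.log M| ≤ t := abs_le.2 ⟨by linarith, by linarith⟩
    linarith
  have hmeasB : MeasurableSet {ω | M * Real.exp t ≤ f ω} := hmeasf measurableSet_Ici
  have hmeasC : MeasurableSet {ω | f ω < M * Real.exp (-t)} := hmeasf measurableSet_Iio
  have hPA : (P {ω | |Real.log (f ω) - Real.log M| > t}).toReal
      ≤ (P {ω | M * Real.exp t ≤ f ω}).toReal + (P {ω | f ω < M * Real.exp (-t)}).toReal := by
    have h1 : P {ω | |Real.log (f ω) - Real.log M| > t}
        ≤ P {ω | M * Real.exp t ≤ f ω} + P {ω | f ω < M * Real.exp (-t)} :=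
      le_trans (measure_mono hsubset) (measure_union_le _ _)
    have h2 := ENNReal.toReal_mono
      (ENNReal.add_ne_top.2 ⟨measure_ne_top P _, measure_ne_top P _⟩) h1
    rwa [ENNReal.toReal_add (measure_ne_top P _) (measure_ne_top P _)] at h2
  have hfinal : Real.exp (-t) + K * Real.sqrt 2 * Real.exp (-t / 2)
      ≤ 3 * K * Real.exp (-t / 2) := by
    have hsqrt2 : Real.sqrt 2 ≤ 2 := by
      nlinarith [Real.sq_sqrt (by norm_num : (0:ℝ) ≤ 2), Real.sqrt_nonneg 2]
    have hexp : Real.exp (-t) ≤ Real.exp (-t / 2) := Real.exp_le_exp.2 (by linarith)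
    have h1 : K * Real.sqrt 2 * Real.exp (-t / 2) ≤ K * 2 * Real.exp (-t / 2) := by
      gcongr
    have h2 : Real.exp (-t) ≤ K * Real.exp (-t / 2) :=
      le_trans hexp (le_mul_of_one_le_left (Real.exp_pos _).le hK)
    linarith
  calc (P {ω | |Real.log (f ω) - Real.log M| > t}).toReal
      ≤ (P {ω | M * Real.exp t ≤ f ω}).toReal + (P {ω | f ω < M * Real.exp (-t)}).toReal := hPA
    _ ≤ Real.exp (-t) + K * Real.sqrt 2 * Real.exp (-t / 2) := add_le_add hupper hlower
    _ ≤ 3 * K * Real.exp (-t / 2) := hfinal
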